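/- Let ν be irrational, and let (c_j) be the sequence of denominators of the continued fraction convergents of ν. For each j let D_{c_j} = −s_j log s_j − (1−s_j) log(1−s_j) with s_j = c_j ν − ⌊c_j ν⌋ be the entropic chaos degree of the rotation R_ν with respect to the equi-partition of [0,2π) into c_j equal intervals. Then D_{c_j} → 0 as j → ∞. -/

import Mathlib

open Real Filter

open GenContFract in
/-- The continuants of `GenContFract.of v` are integer-valued. -/
theorem exists_int_pair_eq_contsAux (v : ℝ) (n : ℕ) :
    ∃ p : GenContFract.Pair ℤ, (GenContFract.of v).contsAux n = p.map (↑) := by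
  induction n using Nat.strong_induction_on with
  | _ n IH =>
    let g := GenContFract.of v
    rcases n with (_ | _ | n)
    · exact ⟨⟨1, 0⟩, by simp [GenContFract.contsAux, GenContFract.Pair.map]⟩
    · refine ⟨⟨⌊v⌋, 1⟩, ?_⟩
      simp [GenContFract.contsAux, GenContFract.Pair.map, GenContFract.of_h_eq_floor, g]
    · obtain ⟨pred_conts, pred_conts_eq⟩ := IH (n + 1) <| lt_add_one (n + 1)
      rcases s_ppred_nth_eq : g.s.get? n with gp_n | gp_n
      · use pred_conts
        have : g.contsAux (n + 2) = g.contsAux (n + 1) :=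
          GenContFract.contsAux_stable_of_terminated (n + 1).le_succ s_ppred_nth_eq
        show g.contsAux (n + 2) = _
        exact this.trans pred_conts_eq
      · obtain ⟨ppred_conts, ppred_conts_eq⟩ :=
          IH n <| lt_of_le_of_lt n.le_succ <| lt_add_one <| n + 1
        obtain ⟨a_eq_one, z, b_eq_z⟩ : gp_n.a = 1 ∧ ∃ z : ℤ, gp_n.b = (z : ℝ) :=
          GenContFract.of_partNum_eq_one_and_exists_int_partDen_eq s_ppred_nth_eq
        show ∃ p : GenContFract.Pair ℤ, g.contsAux (n + 2) = p.map (↑)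
        simp only [a_eq_one, b_eq_z,
          GenContFract.contsAux_recurrence s_ppred_nth_eq ppred_conts_eq pred_conts_eq]
        obtain ⟨pa, pb⟩ := ppred_conts
        obtain ⟨qa, qb⟩ := pred_conts
        refine ⟨⟨z * qa + pa, z * qb + pb⟩, ?_⟩
        simp [GenContFract.nextConts, GenContFract.nextNum, GenContFract.nextDen,
          GenContFract.Pair.map]

theorem exists_int_eq_nums (v : ℝ) (n : ℕ) :
    ∃ z : ℤ, (GenContFract.of v).nums n = (z : ℝ) := by
  obtain ⟨⟨a, b⟩, h⟩ := exists_int_pair_eq_contsAux v (n + 1)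
  refine ⟨a, ?_⟩
  rw [GenContFract.num_eq_conts_a, GenContFract.nth_cont_eq_succ_nth_contAux, h]
  rfl

/-- The binary (Shannon) entropy `H(s) = −s log s − (1−s) log (1−s)` (natural log,
convention `0 · log 0 = 0`). -/
noncomputable def binEnt (s : ℝ) : ℝ :=
  -s * Real.log s - (1 - s) * Real.log (1 - s)

theorem binEnt_eq (s : ℝ) : binEnt s = Real.negMulLog s + Real.negMulLog (1 - s) := by
  simp [binEnt, Real.negMulLog]; ring

theorem continuous_binEnt : Continuous binEnt := by
  have : Continuous fun s : ℝ => Real.negMulLog s + Real.negMulLog (1 - s) := by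
    fun_prop
  simpa [funext binEnt_eq] using this

/-- Limiting statement in the proof of Proposition 4.1: for irrational `ν`, along the
sequence `c_j` of denominators of the continued fraction convergents of `ν`, the entropic
chaos degree `D_{c_j} = H(c_j ν − ⌊c_j ν⌋)` of the rotation `R_ν` with respect to the
equi-partition of `[0,2π)` into `c_j` equal intervals tends to `0`. -/
theorem ecd_along_convergent_denominators_tendsto_zero (ν : ℝ) (hν : Irrational ν) :
    Tendsto (fun j => binEnt (Int.fract ((GenContFract.of ν).dens j * ν)))
      atTop (nhds 0) := by
  set g := GenContFract.of ν with hg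
  -- ν is irrational, so the continued fraction never terminates
  have hnt : ∀ n, ¬g.TerminatedAt n := by
    intro n hn
    have hterm : g.Terminates := ⟨n, hn⟩
    obtain ⟨q, hq⟩ := (GenContFract.terminates_iff_rat ν).mp hterm
    exact hν ⟨q, hq.symm⟩
  -- denominators are at least Fibonacci numbers
  have hfib : ∀ n, (Nat.fib (n + 1) : ℝ) ≤ g.dens n := by
    intro n
    exact GenContFract.succ_nth_fib_le_of_nth_den (Or.inr (hnt _))
  have hdpos : ∀ n, (0:ℝ) < g.dens n := by
    intro n
    refine lt_of_lt_of_le ?_ (hfib n)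
    exact_mod_cast Nat.fib_pos.2 n.succ_pos
  -- the error term tends to zero
  have herr : Tendsto (fun n => g.dens n * ν - g.nums n) atTop (nhds 0) := by
    have hbound : ∀ n, |g.dens n * ν - g.nums n| ≤ 1 / (Nat.fib (n + 2) : ℝ) := by
      intro n
      have h1 := GenContFract.abs_sub_convs_le (v := ν) (n := n) (hnt n)
      have hconv : g.convs n = g.nums n / g.dens n := GenContFract.conv_eq_num_div_den
      have h2 : g.dens n * ν - g.nums n = g.dens n * (ν - g.convs n) := by
        rw [hconv, mul_sub, mul_div_cancel₀ _ (hdpos n).ne']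
      rw [h2, abs_mul, abs_of_pos (hdpos n)]
      calc g.dens n * |ν - g.convs n| ≤ g.dens n * (1 / (g.dens n * g.dens (n+1))) := by
            exact mul_le_mul_of_nonneg_left h1 (hdpos n).le
        _ = 1 / g.dens (n + 1) := by
            have hne := (hdpos n).ne'
            have hne' := (hdpos (n+1)).ne'
            field_simp
        _ ≤ 1 / (Nat.fib (n + 2) : ℝ) := by
            apply one_div_le_one_div_of_le
            · exact_mod_cast Nat.fib_pos.2 (Nat.succ_pos _)
            · exact hfib (n + 1)
    have hfibtop : Tendsto (fun n => (Nat.fib (n + 2) : ℝ)) atTop atTop := by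
      apply tendsto_natCast_atTop_atTop.comp
      apply tendsto_atTop_mono' atTop ?_ tendsto_id
      filter_upwards [eventually_ge_atTop 5] with n hn
      calc (id n : ℕ) = n := rfl
        _ ≤ Nat.fib n := Nat.le_fib_self hn
        _ ≤ Nat.fib (n + 2) := Nat.fib_mono (by omega)
    have h0 : Tendsto (fun n => 1 / (Nat.fib (n + 2) : ℝ)) atTop (nhds 0) := by
      simpa [one_div, Pi.inv_def] using hfibtop.inv_tendsto_atTop
    exact squeeze_zero_norm hbound h0
  -- the composed function binEnt ∘ fract is continuous
  have hcont : Continuous (fun x : ℝ => binEnt (Int.fract x)) := by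
    have : Continuous (binEnt ∘ Int.fract) := by
      apply ContinuousOn.comp_fract'' continuous_binEnt.continuousOn
      simp [binEnt]
    exact this
  have hlim : Tendsto (fun n => binEnt (Int.fract (g.dens n * ν - g.nums n)))
      atTop (nhds 0) := by
    have := (hcont.tendsto 0).comp herr
    simpa [binEnt, Function.comp_def] using this
  refine hlim.congr ?_
  intro n
  obtain ⟨z, hz⟩ := exists_int_eq_nums ν n
  rw [hz]
  congr 1
  rw [show g.dens n * ν - (z:ℝ) = g.dens n * ν + (-z : ℤ) by push_cast; ring,
    Int.fract_add_intCast]
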